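/- The data language L_inc = { (α,a₁)…(α,a_m)(β,b₁)…(β,b_n) : a₁,…,a_m pairwise distinct, b₁,…,b_n pairwise distinct, and {a₁,…,a_m} ⊆ {b₁,…,b_n} } is accepted by a weak 2-pebble automaton; moreover every word in L_inc satisfies m ≤ n. -/

import Mathlib

/-! Core definitions: weak pebble automata over data words. -/

inductive PAct where
  | stay | right | place | lift
deriving DecidableEq

inductive Tape (Sigma : Type) where
  | leftMarker | rightMarker | letter (σ : Sigma)

/-- The label of position `p` of the padded input `⊲ w ⊳` (positions `1..n` carry
the letters of `w`, position `0` the left-end marker, positions `> n` the right-end marker). -/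
def labelAt {Sigma D : Type} (w : List (Sigma × D)) (p : ℕ) : Tape Sigma :=
  if p = 0 then Tape.leftMarker
  else
    match w[p - 1]? with
    | some x => Tape.letter x.1
    | none => Tape.rightMarker

/-- The data value of position `p` (markers carry no data value). -/
def dataAt {Sigma D : Type} (w : List (Sigma × D)) (p : ℕ) : Option D :=
  if p = 0 then none else (w[p - 1]?).map Prod.snd

/-- A (one-way, alternating) weak `k`-pebble automaton over the alphabet `Sigma`.
Pebbles are numbered from `k` down to `1`; pebble `i` being the head pebble.
A transition `(i, σ, V, q) → (p, act)` is represented by `δ i σ V q p act`. -/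
structure WeakPA (Sigma : Type) (k : ℕ) where
  Q : Type
  finQ : Fintype Q
  q0 : Q
  F : Set Q
  U : Set Q
  δ : ℕ → Tape Sigma → Set ℕ → Q → Q → PAct → Prop

namespace WeakPA

variable {Sigma D : Type} {k : ℕ}

/-- A configuration `(i, q, θ)`: head pebble `i`, current state `q`,
pebble assignment `θ` (meaningful on pebbles `i,…,k`). -/
abbrev Config (A : WeakPA Sigma k) : Type := ℕ × A.Q × (ℕ → ℕ)

/-- The set `V = { l : l > i, l ≤ k, pebble l sees the same data value as pebble i }`. -/
def eqSet (w : List (Sigma × D)) (k i : ℕ) (θ : ℕ → ℕ) : Set ℕ :=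
  {l | i < l ∧ l ≤ k ∧ (dataAt w (θ l)).isSome ∧ dataAt w (θ l) = dataAt w (θ i)}

/-- One step of the weak `k`-PA `A` on the input word `w`. -/
def step (A : WeakPA Sigma k) (w : List (Sigma × D)) :
    A.Config → A.Config → Prop := fun c c' =>
  1 ≤ c.1 ∧ c.1 ≤ k ∧
  (∀ j, j ≠ c.1 → j ≠ c.1 - 1 → c'.2.2 j = c.2.2 j) ∧
  ∃ act : PAct,
    A.δ c.1 (labelAt w (c.2.2 c.1)) (eqSet w k c.1 c.2.2) c.2.1 c'.2.1 act ∧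
    match act with
    | PAct.stay =>
        c'.1 = c.1 ∧ c'.2.2 c.1 = c.2.2 c.1 ∧ c'.2.2 (c.1 - 1) = c.2.2 (c.1 - 1)
    | PAct.right =>
        c'.1 = c.1 ∧ c'.2.2 c.1 = c.2.2 c.1 + 1 ∧ c'.2.2 (c.1 - 1) = c.2.2 (c.1 - 1)
    | PAct.lift =>
        c'.1 = c.1 + 1 ∧ c'.2.2 c.1 = c.2.2 c.1 ∧ c'.2.2 (c.1 - 1) = c.2.2 (c.1 - 1)
    | PAct.place =>
        2 ≤ c.1 ∧ c'.1 = c.1 - 1 ∧ c'.2.2 c.1 = c.2.2 c.1 ∧ c'.2.2 (c.1 - 1) = c.2.2 c.1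

/-- The alternating "leads to acceptance" semantics. -/
inductive Leads (A : WeakPA Sigma k) (w : List (Sigma × D)) : A.Config → Prop where
  | final {c : A.Config} : c.2.1 ∈ A.F → Leads A w c
  | univ {c : A.Config} : c.2.1 ∈ A.U →
      (∀ c', A.step w c c' → Leads A w c') → Leads A w c
  | exist {c c' : A.Config} : c.2.1 ∉ A.F → c.2.1 ∉ A.U →
      A.step w c c' → Leads A w c' → Leads A w c

/-- The initial configuration: pebble `k` on the left-end marker in the initial state. -/
def initConfig (A : WeakPA Sigma k) : A.Config := (k, A.q0, fun _ => 0)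

def Accepts (A : WeakPA Sigma k) (w : List (Sigma × D)) : Prop :=
  A.Leads w A.initConfig

/-- The data language of `A` over the data domain `D`. -/
def Lang (A : WeakPA Sigma k) (D : Type) : Set (List (Sigma × D)) :=
  {w | A.Accepts w}

/-- A weak PA is nondeterministic if it has no universal states. -/
def Nondeterministic (A : WeakPA Sigma k) : Prop := A.U = ∅

/-- A weak PA is deterministic (over data domain `D`) if it is nondeterministic and
exactly one transition applies to each configuration. -/
def Deterministic (A : WeakPA Sigma k) (D : Type) : Prop :=
  A.U = ∅ ∧ ∀ (w : List (Sigma × D)) (c : A.Config),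
    1 ≤ c.1 → c.1 ≤ k → ∃! c', A.step w c c'

/-- Top view weak PA: the head pebble `i` may test data equality only with
pebble `i+1`, i.e. every transition has `V = ∅` or `V = {i+1}`. -/
def TopView (A : WeakPA Sigma k) : Prop :=
  ∀ i t V q q' a, A.δ i t V q q' a → V = ∅ ∨ V = {i + 1}

/-- The states `U` of universal states are required to be disjoint from `F`. -/
def WellFormed (A : WeakPA Sigma k) : Prop := ∀ q ∈ A.U, q ∉ A.F

end WeakPA

/-- The data language `L_inc` over the two-letter alphabet `{α, β}` (here `Bool`,
with `false` playing the role of `α` and `true` of `β`): an `α`-block with pairwise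
distinct data values followed by a `β`-block with pairwise distinct data values,
every data value of the `α`-block occurring in the `β`-block. -/
def Linc (D : Type) : Set (List (Bool × D)) :=
  {w | ∃ u v : List D,
    w = (u.map fun a => (false, a)) ++ (v.map fun b => (true, b)) ∧
    u.Nodup ∧ v.Nodup ∧ ∀ a ∈ u, a ∈ v}

namespace LincProof
open WeakPA

/-- States of our weak 2-PA. -/
inductive St where
  | qa | qb | aS | aC | bS | bC | ma | mb | qF
deriving DecidableEq

instance : Fintype St := ⟨{St.qa, St.qb, St.aS, St.aC, St.bS, St.bC, St.ma, St.mb, St.qF}, fun x => by cases x <;> simp⟩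

/-- The transition relation. -/
inductive Del : ℕ → Tape Bool → Set ℕ → St → St → PAct → Prop where
  | start {V} : Del 2 Tape.leftMarker V .qa .qa .right
  | placeA {V} : Del 2 (Tape.letter false) V .qa .aS .place
  | startA {t V} : Del 1 t V .aS .aC .right
  | scanA {b V} (h : 2 ∉ V) : Del 1 (Tape.letter b) V .aC .aC .right
  | foundA {V} (h : 2 ∈ V) : Del 1 (Tape.letter true) V .aC .ma .lift
  | moveA {t V} : Del 2 t V .ma .qa .right
  | placeB1 {V} : Del 2 (Tape.letter true) V .qa .bS .place
  | placeB2 {V} : Del 2 (Tape.letter true) V .qb .bS .place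
  | startB {t V} : Del 1 t V .bS .bC .right
  | scanB {V} (h : 2 ∉ V) : Del 1 (Tape.letter true) V .bC .bC .right
  | endB {V} : Del 1 Tape.rightMarker V .bC .mb .lift
  | moveB {t V} : Del 2 t V .mb .qb .right
  | acceptA {V} : Del 2 Tape.rightMarker V .qa .qF .stay
  | acceptB {V} : Del 2 Tape.rightMarker V .qb .qF .stay

/-- The weak 2-PA accepting `Linc`. -/
def A : WeakPA Bool 2 := ⟨St, inferInstance, .qa, {.qF}, ∅, Del⟩

section basic
variable {D : Type} {w : List (Bool × D)}

lemma labelAt_zero : labelAt w 0 = Tape.leftMarker := rfl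

lemma labelAt_letter_iff {p : ℕ} {b : Bool} :
    labelAt w p = Tape.letter b ↔ p ≠ 0 ∧ ∃ x, w[p-1]? = some (b, x) := by
  unfold labelAt
  rcases eq_or_ne p 0 with h | h
  · simp [h]
  · simp only [h, if_neg h, ne_eq, not_false_eq_true, true_and]
    rcases hg : w[p-1]? with _ | z
    · simp
    · simp only []
      constructor
      · rintro h'
        cases h'
        exact ⟨z.2, by simpa using hg⟩
      · rintro ⟨x, hx⟩
        cases hx
        rfl

lemma labelAt_rightMarker_iff {p : ℕ} :
    labelAt w p = Tape.rightMarker ↔ p ≠ 0 ∧ w.length < p := by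
  unfold labelAt
  rcases eq_or_ne p 0 with h | h
  · simp [h]
  · simp only [if_neg h, ne_eq, h, not_false_eq_true, true_and]
    rcases hg : w[p-1]? with _ | z
    · simp only []
      rw [List.getElem?_eq_none_iff] at hg
      constructor
      · intro; omega
      · intro; rfl
    · have := List.mem_of_getElem? hg
      have hlt : p - 1 < w.length := by
        by_contra h'
        rw [List.getElem?_eq_none_iff.2 (by omega)] at hg; cases hg
      simp only []
      constructor
      · intro h'; cases h'
      · intro; omega

lemma labelAt_leftMarker_iff {p : ℕ} :
    labelAt w p = Tape.leftMarker ↔ p = 0 := by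
  constructor
  · intro h
    by_contra hp
    unfold labelAt at h
    rw [if_neg hp] at h
    rcases hg : w[p-1]? with _ | z <;> rw [hg] at h <;> simp at h
  · intro h; rw [h]; rfl

lemma dataAt_eq {p : ℕ} (hp : p ≠ 0) : dataAt w p = (w[p-1]?).map Prod.snd := by
  unfold dataAt; rw [if_neg hp]

lemma dataAt_isSome_iff {p : ℕ} :
    (dataAt w p).isSome ↔ 1 ≤ p ∧ p ≤ w.length := by
  unfold dataAt
  rcases eq_or_ne p 0 with h | h
  · simp [h]
  · rw [if_neg h]
    rcases hg : w[p-1]? with _ | z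
    · rw [List.getElem?_eq_none_iff] at hg
      simp only [Option.map_none, Option.isSome_none, Bool.false_eq_true, false_iff]
      omega
    · have hlt : p - 1 < w.length := by
        by_contra h'
        rw [List.getElem?_eq_none_iff.2 (by omega)] at hg; cases hg
      simp only [Option.map_some, Option.isSome_some, true_iff]
      omega

lemma labelAt_letter_isSome {p : ℕ} {b : Bool} (h : labelAt w p = Tape.letter b) :
    (dataAt w p).isSome ∧ 1 ≤ p ∧ p ≤ w.length := by
  rw [labelAt_letter_iff] at h
  obtain ⟨hp, x, hx⟩ := h
  have : dataAt w p = some x := by rw [dataAt_eq hp, hx]; rfl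
  have hs : (dataAt w p).isSome := by rw [this]; rfl
  exact ⟨hs, dataAt_isSome_iff.1 hs⟩

lemma labelAt_rightMarker_of_lt {p : ℕ} (h1 : p ≠ 0) (h2 : w.length < p) :
    labelAt w p = Tape.rightMarker := labelAt_rightMarker_iff.2 ⟨h1, h2⟩

/-- Pebble assignments carrying just the two relevant positions. -/
def pos (p2 p1 : ℕ) : ℕ → ℕ := fun j => if j = 2 then p2 else if j = 1 then p1 else 0

@[simp] lemma pos_two {p2 p1 : ℕ} : pos p2 p1 2 = p2 := rfl
@[simp] lemma pos_one {p2 p1 : ℕ} : pos p2 p1 1 = p1 := rfl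
@[simp] lemma pos_zero {p2 p1 : ℕ} : pos p2 p1 0 = 0 := rfl

lemma mem_eqSet_one {θ : ℕ → ℕ} :
    2 ∈ eqSet w 2 1 θ ↔ (dataAt w (θ 2)).isSome ∧ dataAt w (θ 2) = dataAt w (θ 1) := by
  unfold eqSet
  simp

end basic
end LincProof
namespace LincProof
open WeakPA
section steps
variable {D : Type} {w : List (Bool × D)}

lemma step_right2 {q q' : St} {p2 p1 : ℕ}
    (hδ : Del 2 (labelAt w p2) (eqSet w 2 2 (pos p2 p1)) q q' PAct.right) :
    A.step w (2, q, pos p2 p1) (2, q', pos (p2+1) p1) := by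
  refine ⟨by norm_num, le_refl _, ?_, PAct.right, hδ, rfl, rfl, rfl⟩
  intro j h2 h1
  simp [pos, show j ≠ 2 from h2, show j ≠ 1 from h1]

lemma step_stay2 {q q' : St} {p2 p1 : ℕ}
    (hδ : Del 2 (labelAt w p2) (eqSet w 2 2 (pos p2 p1)) q q' PAct.stay) :
    A.step w (2, q, pos p2 p1) (2, q', pos p2 p1) := by
  refine ⟨by norm_num, le_refl _, ?_, PAct.stay, hδ, rfl, rfl, rfl⟩
  intro j h2 h1; rfl

lemma step_place2 {q q' : St} {p2 p1 : ℕ}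
    (hδ : Del 2 (labelAt w p2) (eqSet w 2 2 (pos p2 p1)) q q' PAct.place) :
    A.step w (2, q, pos p2 p1) (1, q', pos p2 p2) := by
  refine ⟨by norm_num, le_refl _, ?_, PAct.place, hδ, by norm_num, rfl, rfl, rfl⟩
  intro j h2 h1
  simp [pos, show j ≠ 2 from h2, show j ≠ 1 from h1]

lemma step_right1 {q q' : St} {p2 p1 : ℕ}
    (hδ : Del 1 (labelAt w p1) (eqSet w 2 1 (pos p2 p1)) q q' PAct.right) :
    A.step w (1, q, pos p2 p1) (1, q', pos p2 (p1+1)) := by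
  refine ⟨le_refl _, by norm_num, ?_, PAct.right, hδ, rfl, rfl, rfl⟩
  intro j h1 h0
  simp [pos, show j ≠ 1 from h1]

lemma step_lift1 {q q' : St} {p2 p1 : ℕ}
    (hδ : Del 1 (labelAt w p1) (eqSet w 2 1 (pos p2 p1)) q q' PAct.lift) :
    A.step w (1, q, pos p2 p1) (2, q', pos p2 p1) := by
  refine ⟨le_refl _, by norm_num, ?_, PAct.lift, hδ, rfl, rfl, rfl⟩
  intro j h1 h0; rfl

lemma leads_of_step {c c' : A.Config} (hs : A.step w c c')
    (hF : c.2.1 ≠ St.qF) (h : A.Leads w c') : A.Leads w c := by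
  refine WeakPA.Leads.exist ?_ ?_ hs h
  · exact hF
  · exact fun h => h

lemma leads_final {q : A.Q} {i : ℕ} {θ : ℕ → ℕ} (h : q = St.qF) :
    A.Leads w (i, q, θ) := WeakPA.Leads.final h

end steps
end LincProof
namespace LincProof
open WeakPA
section complete
set_option linter.deprecated false

variable {D : Type} {u v : List D}

/-- Abbreviation for the word built from blocks `u`, `v`. -/
def mkw (u v : List D) : List (Bool × D) :=
  (u.map fun a => (false, a)) ++ (v.map fun b => (true, b))

variable (u v)

lemma mkw_length : (mkw u v).length = u.length + v.length := by
  simp [mkw]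

lemma mkw_get?_lo {i : ℕ} (h : i < u.length) :
    (mkw u v)[i]? = (u[i]?).map fun a => (false, a) := by
  rw [mkw, List.getElem?_append_left (by simpa using h), List.getElem?_map]

lemma mkw_get?_hi {i : ℕ} (h : u.length ≤ i) :
    (mkw u v)[i]? = (v[i - u.length]?).map fun b => (true, b) := by
  rw [mkw, List.getElem?_append_right (by simpa using h), List.getElem?_map]
  simp

lemma mkw_label_lo {p : ℕ} (h1 : 1 ≤ p) (h2 : p ≤ u.length) :
    labelAt (mkw u v) p = Tape.letter false := by
  rw [labelAt_letter_iff]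
  have hpu : p - 1 < u.length := by omega
  obtain ⟨a, ha⟩ : ∃ a, u[p-1]? = some a := ⟨u.get ⟨_, hpu⟩, List.getElem?_eq_getElem hpu⟩
  refine ⟨by omega, a, ?_⟩
  rw [mkw_get?_lo u v (by omega), ha]; rfl

lemma mkw_data_lo {p : ℕ} (h1 : 1 ≤ p) (h2 : p ≤ u.length) :
    dataAt (mkw u v) p = u[p-1]? := by
  rw [dataAt_eq (by omega), mkw_get?_lo u v (by omega), Option.map_map]
  simp

lemma mkw_label_hi {p : ℕ} (h1 : u.length < p) (h2 : p ≤ u.length + v.length) :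
    labelAt (mkw u v) p = Tape.letter true := by
  rw [labelAt_letter_iff]
  have hv : p - 1 - u.length < v.length := by omega
  obtain ⟨a, ha⟩ : ∃ a, v[p - 1 - u.length]? = some a :=
    ⟨v.get ⟨_, hv⟩, List.getElem?_eq_getElem hv⟩
  refine ⟨by omega, a, ?_⟩
  rw [mkw_get?_hi u v (by omega), ha]; rfl

lemma mkw_data_hi {p : ℕ} (h1 : u.length < p) (h2 : p ≤ u.length + v.length) :
    dataAt (mkw u v) p = v[p - 1 - u.length]? := by
  rw [dataAt_eq (by omega), mkw_get?_hi u v (by omega), Option.map_map]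
  simp

lemma mkw_label_end {p : ℕ} (h : u.length + v.length < p) :
    labelAt (mkw u v) p = Tape.rightMarker :=
  labelAt_rightMarker_of_lt (by omega) (by rw [mkw_length]; omega)

variable {u v}
variable (hu : u.Nodup) (hv : v.Nodup) (huv : ∀ a ∈ u, a ∈ v)

-- distinctness within the β block
include hv in
lemma mkw_beta_ne {s t : ℕ} (hs1 : u.length < s) (ht : t ≤ u.length + v.length)
    (hst : s ≠ t) (ht1 : u.length < t) (hs : s ≤ u.length + v.length) :
    dataAt (mkw u v) s ≠ dataAt (mkw u v) t := by
  rw [mkw_data_hi u v hs1 hs, mkw_data_hi u v ht1 ht]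
  intro h
  have := (List.getElem?_inj (show s - 1 - u.length < v.length by omega) hv).1 h
  omega

include hu in
lemma mkw_alpha_ne {s t : ℕ} (hs1 : 1 ≤ s) (hs2 : s ≤ u.length)
    (ht1 : 1 ≤ t) (ht2 : t ≤ u.length) (hst : s ≠ t) :
    dataAt (mkw u v) s ≠ dataAt (mkw u v) t := by
  rw [mkw_data_lo u v hs1 hs2, mkw_data_lo u v ht1 ht2]
  intro h
  have := (List.getElem?_inj (show s - 1 < u.length by omega) hu).1 h
  omega

-- the first (and only) β occurrence of the data value of α-position p
include hv huv in
lemma mkw_exists_beta {p : ℕ} (h1 : 1 ≤ p) (h2 : p ≤ u.length) :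
    ∃ t, u.length < t ∧ t ≤ u.length + v.length ∧
      dataAt (mkw u v) t = dataAt (mkw u v) p ∧
      ∀ s, u.length < s → s ≤ u.length + v.length → s ≠ t →
        dataAt (mkw u v) s ≠ dataAt (mkw u v) p := by
  have hpu : p - 1 < u.length := by omega
  obtain ⟨x, hx⟩ : ∃ x, u[p-1]? = some x := ⟨u.get ⟨_, hpu⟩, List.getElem?_eq_getElem hpu⟩
  have hxv : x ∈ v := huv x (List.mem_of_getElem? hx)
  obtain ⟨i, hi⟩ := List.mem_iff_getElem?.1 hxv
  have hiv : i < v.length := by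
    by_contra h'
    rw [List.getElem?_eq_none_iff.2 (by omega)] at hi; cases hi
  refine ⟨u.length + 1 + i, by omega, by omega, ?_, ?_⟩
  · rw [mkw_data_hi u v (by omega) (by omega), mkw_data_lo u v h1 h2, hx]
    simpa using hi
  · intro s hs1 hs2 hst
    rw [mkw_data_hi u v hs1 hs2, mkw_data_lo u v h1 h2, hx]
    intro h
    have := (List.getElem?_inj (show s - 1 - u.length < v.length by omega) hv).1 (h.trans hi.symm)
    omega

end complete
end LincProof
namespace LincProof
open WeakPA
section run
set_option linter.deprecated false
variable {D : Type} {u v : List D}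

lemma bscan_end {p r : ℕ} (hr : u.length + v.length < r)
    (next : ∀ r', A.Leads (mkw u v) (2, St.qb, pos (p+1) r')) :
    A.Leads (mkw u v) (1, St.bC, pos p r) := by
  refine leads_of_step (step_lift1 (q' := St.mb) ?_) (fun h => St.noConfusion h) ?_
  · rw [mkw_label_end u v hr]; exact Del.endB
  · exact leads_of_step (step_right2 Del.moveB) (fun h => St.noConfusion h) (next r)

lemma bscan (hv : v.Nodup) {p : ℕ} (hp1 : u.length < p) (hp2 : p ≤ u.length + v.length)
    (next : ∀ r', A.Leads (mkw u v) (2, St.qb, pos (p+1) r')) :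
    ∀ d r, u.length + v.length < r + d → p < r →
      A.Leads (mkw u v) (1, St.bC, pos p r) := by
  intro d
  induction d with
  | zero => intro r h hr; exact bscan_end (by omega) next
  | succ d ih =>
    intro r h hr
    rcases lt_or_ge (u.length + v.length) r with h' | h'
    · exact bscan_end h' next
    · refine leads_of_step (step_right1 (q' := St.bC) ?_) (fun h => St.noConfusion h) (ih (r+1) (by omega) (by omega))
      rw [mkw_label_hi u v (by omega) h']
      refine Del.scanB ?_
      rw [mem_eqSet_one, pos_two, pos_one]
      rintro ⟨hs, he⟩
      exact mkw_beta_ne hv (by omega) hp2 (by omega) hp1 h' he.symm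

lemma lbeta_end {p r : ℕ} (h : u.length + v.length < p) :
    A.Leads (mkw u v) (2, St.qb, pos p r) := by
  refine leads_of_step (step_stay2 (q' := St.qF) ?_) (fun h => St.noConfusion h) (leads_final rfl)
  rw [mkw_label_end u v h]; exact Del.acceptB

lemma lbeta (hv : v.Nodup) : ∀ d p, u.length + v.length < p + d → u.length < p →
    ∀ r, A.Leads (mkw u v) (2, St.qb, pos p r) := by
  intro d
  induction d with
  | zero => intro p h hp r; exact lbeta_end (by omega)
  | succ d ih =>
    intro p h hp r
    rcases lt_or_ge (u.length + v.length) p with h' | h'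
    · exact lbeta_end h'
    · refine leads_of_step (step_place2 (q' := St.bS) ?_) (fun h => St.noConfusion h) ?_
      · rw [mkw_label_hi u v hp h']; exact Del.placeB2
      · refine leads_of_step (step_right1 Del.startB) (fun h => St.noConfusion h) ?_
        exact bscan hv hp h' (fun r' => ih (p+1) (by omega) (by omega) r')
          (u.length + v.length + 1 - (p+1)) (p+1) (by omega) (by omega)

lemma ascan_end {p t : ℕ} (hp1 : 1 ≤ p) (hp2 : p ≤ u.length)
    (ht1 : u.length < t) (ht2 : t ≤ u.length + v.length)
    (hdt : dataAt (mkw u v) t = dataAt (mkw u v) p)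
    (next : ∀ r', A.Leads (mkw u v) (2, St.qa, pos (p+1) r')) :
    A.Leads (mkw u v) (1, St.aC, pos p t) := by
  refine leads_of_step (step_lift1 (q' := St.ma) ?_) (fun h => St.noConfusion h) ?_
  · rw [mkw_label_hi u v ht1 ht2]
    refine Del.foundA ?_
    rw [mem_eqSet_one, pos_two, pos_one]
    refine ⟨?_, hdt.symm⟩
    rw [dataAt_isSome_iff, mkw_length]
    omega
  · exact leads_of_step (step_right2 Del.moveA) (fun h => St.noConfusion h) (next t)

lemma ascan {p t : ℕ} (hp1 : 1 ≤ p) (hp2 : p ≤ u.length)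
    (ht1 : u.length < t) (ht2 : t ≤ u.length + v.length)
    (hdt : dataAt (mkw u v) t = dataAt (mkw u v) p)
    (hmid : ∀ s, p < s → s < t → dataAt (mkw u v) s ≠ dataAt (mkw u v) p)
    (next : ∀ r', A.Leads (mkw u v) (2, St.qa, pos (p+1) r')) :
    ∀ d r, t ≤ r + d → p < r → r ≤ t → A.Leads (mkw u v) (1, St.aC, pos p r) := by
  intro d
  induction d with
  | zero =>
    intro r h hr1 hr2
    have : r = t := by omega
    subst this
    exact ascan_end hp1 hp2 ht1 ht2 hdt next
  | succ d ih =>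
    intro r h hr1 hr2
    rcases eq_or_lt_of_le hr2 with h' | h'
    · subst h'; exact ascan_end hp1 hp2 ht1 ht2 hdt next
    · obtain ⟨b, hb⟩ : ∃ b, labelAt (mkw u v) r = Tape.letter b := by
        rcases le_or_gt r u.length with h'' | h''
        · exact ⟨false, mkw_label_lo u v (by omega) h''⟩
        · exact ⟨true, mkw_label_hi u v h'' (by omega)⟩
      refine leads_of_step (step_right1 (q' := St.aC) ?_) (fun h => St.noConfusion h)
        (ih (r+1) (by omega) (by omega) (by omega))
      rw [hb]
      refine Del.scanA ?_
      rw [mem_eqSet_one, pos_two, pos_one]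
      rintro ⟨_, he⟩
      exact hmid r hr1 h' he.symm

lemma lalpha_end (hv : v.Nodup) {r : ℕ} :
    A.Leads (mkw u v) (2, St.qa, pos (u.length+1) r) := by
  rcases Nat.eq_zero_or_pos v.length with h | h
  · refine leads_of_step (step_stay2 (q' := St.qF) ?_) (fun h => St.noConfusion h) (leads_final rfl)
    rw [mkw_label_end u v (by omega)]; exact Del.acceptA
  · refine leads_of_step (step_place2 (q' := St.bS) ?_) (fun h => St.noConfusion h) ?_
    · rw [mkw_label_hi u v (by omega) (by omega)]; exact Del.placeB1
    · refine leads_of_step (step_right1 Del.startB) (fun h => St.noConfusion h) ?_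
      exact bscan hv (by omega) (by omega)
        (fun r' => lbeta hv v.length (u.length+2) (by omega) (by omega) r')
        v.length (u.length+2) (by omega) (by omega)

lemma lalpha (hu : u.Nodup) (hv : v.Nodup) (huv : ∀ a ∈ u, a ∈ v) :
    ∀ d p, u.length + 1 ≤ p + d → 1 ≤ p → p ≤ u.length + 1 →
    ∀ r, A.Leads (mkw u v) (2, St.qa, pos p r) := by
  intro d
  induction d with
  | zero =>
    intro p h h1 h2 r
    have : p = u.length + 1 := by omega
    subst this; exact lalpha_end hv
  | succ d ih =>
    intro p h h1 h2 r
    rcases eq_or_lt_of_le h2 with h' | h'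
    · subst h'; exact lalpha_end hv
    · have hp2 : p ≤ u.length := by omega
      refine leads_of_step (step_place2 (q' := St.aS) ?_) (fun h => St.noConfusion h) ?_
      · rw [mkw_label_lo u v h1 hp2]; exact Del.placeA
      · refine leads_of_step (step_right1 Del.startA) (fun h => St.noConfusion h) ?_
        obtain ⟨t, ht1, ht2, hdt, hother⟩ := mkw_exists_beta hv huv h1 hp2
        have hmid : ∀ s, p < s → s < t → dataAt (mkw u v) s ≠ dataAt (mkw u v) p := by
          intro s hs1 hs2
          rcases le_or_gt s u.length with h'' | h''
          · exact mkw_alpha_ne hu (by omega) h'' h1 hp2 (by omega)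
          · exact hother s h'' (by omega) (by omega)
        exact ascan h1 hp2 ht1 ht2 hdt hmid
          (fun r' => ih (p+1) (by omega) (by omega) (by omega) r')
          (t - (p+1)) (p+1) (by omega) (by omega) (by omega)

lemma complete {w : List (Bool × D)} (hw : w ∈ Linc D) : w ∈ A.Lang D := by
  obtain ⟨u, v, rfl, hu, hv, huv⟩ := hw
  show A.Leads (mkw u v) A.initConfig
  have h0 : A.Leads (mkw u v) (2, St.qa, pos 0 0) := by
    refine leads_of_step (step_right2 (q' := St.qa) ?_) (fun h => St.noConfusion h) ?_
    · exact Del.start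
    · exact lalpha hu hv huv u.length 1 (by omega) le_rfl (by omega) 0
  have he : A.initConfig = ((2, St.qa, pos 0 0) : A.Config) := by
    refine Prod.ext rfl (Prod.ext rfl ?_)
    funext j
    simp [WeakPA.initConfig, pos]
  rw [he]
  exact h0

end run
end LincProof
namespace LincProof
open WeakPA
section sound
variable {D : Type}

def Achk (w : List (Bool × D)) (s : ℕ) : Prop :=
  ∃ t, s < t ∧ t ≤ w.length ∧ labelAt w t = Tape.letter true ∧
    dataAt w t = dataAt w s ∧ ∀ r, s < r → r < t → dataAt w r ≠ dataAt w s

def SufB (w : List (Bool × D)) (p : ℕ) : Prop :=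
  (∀ s, p ≤ s → s ≤ w.length → labelAt w s = Tape.letter true) ∧
  (∀ s t, p ≤ s → s < t → t ≤ w.length → dataAt w s ≠ dataAt w t)

def SufA (w : List (Bool × D)) (p : ℕ) : Prop :=
  ∃ q, p ≤ q ∧ (∀ s, p ≤ s → s < q → labelAt w s = Tape.letter false ∧ Achk w s) ∧ SufB w q

def AfterA (w : List (Bool × D)) (p r : ℕ) : Prop :=
  (∃ t, r ≤ t ∧ t ≤ w.length ∧ labelAt w t = Tape.letter true ∧
    dataAt w t = dataAt w p ∧ ∀ s, r ≤ s → s < t → dataAt w s ≠ dataAt w p) ∧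
  SufA w (p+1)

def AfterB (w : List (Bool × D)) (p r : ℕ) : Prop :=
  (∀ s, r ≤ s → s ≤ w.length → labelAt w s = Tape.letter true ∧ dataAt w s ≠ dataAt w p) ∧
  SufB w (p+1)

def Post (w : List (Bool × D)) (c : A.Config) : Prop :=
  match c.2.1 with
  | .qa => SufA w (if c.2.2 2 = 0 then 1 else c.2.2 2)
  | .qb => SufB w (c.2.2 2)
  | .ma => SufA w (c.2.2 2 + 1)
  | .mb => SufB w (c.2.2 2 + 1)
  | .aS => AfterA w (c.2.2 2) (c.2.2 1 + 1)
  | .aC => AfterA w (c.2.2 2) (c.2.2 1)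
  | .bS => AfterB w (c.2.2 2) (c.2.2 1 + 1)
  | .bC => AfterB w (c.2.2 2) (c.2.2 1)
  | .qF => True

lemma post_of_leads {w : List (Bool × D)} {c : A.Config} (h : A.Leads w c) : Post w c := by
  induction h with
  | @final c hF =>
    obtain ⟨i, q, θ⟩ := c
    have hq : q = St.qF := hF
    subst hq
    exact trivial
  | @univ c hU _ _ => exact absurd hU (fun h => h)
  | @exist c c' hF hU hstep _ ih =>
    obtain ⟨i, q, θ⟩ := c
    obtain ⟨i', q', θ'⟩ := c'
    obtain ⟨h1, h2, hj, act, hδ, hact⟩ := hstep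
    replace hδ : Del i (labelAt w (θ i)) (eqSet w 2 i θ) q q' act := hδ
    replace hj : ∀ j, j ≠ i → j ≠ i - 1 → θ' j = θ j := hj
    generalize hl : labelAt w (θ i) = L at hδ
    generalize hVe : eqSet w 2 i θ = V at hδ
    cases hδ with
    | start =>
      obtain ⟨hi', ha, hb⟩ := hact
      replace ha : θ' 2 = θ 2 + 1 := ha
      have h0 : θ 2 = 0 := labelAt_leftMarker_iff.1 hl
      have ih' : SufA w (if θ' 2 = 0 then 1 else θ' 2) := ih
      rw [ha, h0] at ih'
      show SufA w (if θ 2 = 0 then 1 else θ 2)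
      rw [h0]
      simpa using ih'
    | placeA =>
      obtain ⟨-, hi', ha, hb⟩ := hact
      replace ha : θ' 2 = θ 2 := ha
      replace hb : θ' 1 = θ 2 := hb
      have ih' : AfterA w (θ' 2) (θ' 1 + 1) := ih
      rw [ha, hb] at ih'
      obtain ⟨⟨t, ht1, ht2, ht3, ht4, ht5⟩, q0, hq1, hA, hB⟩ := ih'
      have hp := (labelAt_letter_isSome hl).2
      show SufA w (if θ 2 = 0 then 1 else θ 2)
      rw [if_neg (by omega)]
      refine ⟨q0, by omega, ?_, hB⟩
      intro s hs1 hs2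
      rcases eq_or_lt_of_le hs1 with h' | h'
      · subst h'
        exact ⟨hl, t, by omega, ht2, ht3, ht4, fun r hr1 hr2 => ht5 r (by omega) hr2⟩
      · exact hA s h' hs2
    | startA =>
      show AfterA w (θ 2) (θ 1 + 1)
      obtain ⟨hi', ha, hb⟩ := hact
      replace ha : θ' 1 = θ 1 + 1 := ha
      have hθ2 : θ' 2 = θ 2 := hj 2 (by omega) (by omega)
      have ih' : AfterA w (θ' 2) (θ' 1) := ih
      rw [hθ2, ha] at ih'
      exact ih'
    | scanA hnV =>
      show AfterA w (θ 2) (θ 1)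
      obtain ⟨hi', ha, hb⟩ := hact
      replace ha : θ' 1 = θ 1 + 1 := ha
      have hθ2 : θ' 2 = θ 2 := hj 2 (by omega) (by omega)
      have ih' : AfterA w (θ' 2) (θ' 1) := ih
      rw [hθ2, ha] at ih'
      obtain ⟨⟨t, ht1, ht2, ht3, ht4, ht5⟩, hsA⟩ := ih'
      refine ⟨⟨t, by omega, ht2, ht3, ht4, ?_⟩, hsA⟩
      intro s hs1 hs2
      rcases eq_or_lt_of_le hs1 with h' | h'
      · subst h'
        intro he
        rw [← hVe] at hnV
        exact hnV (mem_eqSet_one.2 ⟨he ▸ (labelAt_letter_isSome hl).1, he.symm⟩)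
      · exact ht5 s h' hs2
    | foundA hmV =>
      show AfterA w (θ 2) (θ 1)
      obtain ⟨hi', ha, hb⟩ := hact
      have hθ2 : θ' 2 = θ 2 := hj 2 (by omega) (by omega)
      have ih' : SufA w (θ' 2 + 1) := ih
      rw [hθ2] at ih'
      rw [← hVe, mem_eqSet_one] at hmV
      obtain ⟨hsome, heq⟩ := hmV
      have h1N : 1 ≤ θ 1 ∧ θ 1 ≤ w.length := dataAt_isSome_iff.1 (heq ▸ hsome)
      exact ⟨⟨θ 1, le_rfl, h1N.2, hl, heq.symm, fun s hs1 hs2 => absurd (lt_of_le_of_lt hs1 hs2) (lt_irrefl _)⟩, ih'⟩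
    | moveA =>
      show SufA w (θ 2 + 1)
      obtain ⟨hi', ha, hb⟩ := hact
      replace ha : θ' 2 = θ 2 + 1 := ha
      have ih' : SufA w (if θ' 2 = 0 then 1 else θ' 2) := ih
      rw [ha, if_neg (by omega)] at ih'
      exact ih'
    | placeB1 =>
      obtain ⟨-, hi', ha, hb⟩ := hact
      replace ha : θ' 2 = θ 2 := ha
      replace hb : θ' 1 = θ 2 := hb
      have ih' : AfterB w (θ' 2) (θ' 1 + 1) := ih
      rw [ha, hb] at ih'
      obtain ⟨hAll, hlab, hdis⟩ := ih'
      have hp := (labelAt_letter_isSome hl).2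
      show SufA w (if θ 2 = 0 then 1 else θ 2)
      rw [if_neg (by omega)]
      refine ⟨θ 2, le_rfl, fun s hs1 hs2 => absurd (lt_of_le_of_lt hs1 hs2) (lt_irrefl _), ?_, ?_⟩
      · intro s hs1 hs2
        rcases eq_or_lt_of_le hs1 with h' | h'
        · subst h'; exact hl
        · exact (hAll s h' hs2).1
      · intro s t hs1 hst ht
        rcases eq_or_lt_of_le hs1 with h' | h'
        · subst h'
          exact fun he => (hAll t (by omega) ht).2 he.symm
        · exact hdis s t h' hst ht
    | placeB2 =>
      obtain ⟨-, hi', ha, hb⟩ := hact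
      replace ha : θ' 2 = θ 2 := ha
      replace hb : θ' 1 = θ 2 := hb
      have ih' : AfterB w (θ' 2) (θ' 1 + 1) := ih
      rw [ha, hb] at ih'
      obtain ⟨hAll, hlab, hdis⟩ := ih'
      show SufB w (θ 2)
      refine ⟨?_, ?_⟩
      · intro s hs1 hs2
        rcases eq_or_lt_of_le hs1 with h' | h'
        · subst h'; exact hl
        · exact (hAll s h' hs2).1
      · intro s t hs1 hst ht
        rcases eq_or_lt_of_le hs1 with h' | h'
        · subst h'
          exact fun he => (hAll t (by omega) ht).2 he.symm
        · exact hdis s t h' hst ht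
    | startB =>
      show AfterB w (θ 2) (θ 1 + 1)
      obtain ⟨hi', ha, hb⟩ := hact
      replace ha : θ' 1 = θ 1 + 1 := ha
      have hθ2 : θ' 2 = θ 2 := hj 2 (by omega) (by omega)
      have ih' : AfterB w (θ' 2) (θ' 1) := ih
      rw [hθ2, ha] at ih'
      exact ih'
    | scanB hnV =>
      show AfterB w (θ 2) (θ 1)
      obtain ⟨hi', ha, hb⟩ := hact
      replace ha : θ' 1 = θ 1 + 1 := ha
      have hθ2 : θ' 2 = θ 2 := hj 2 (by omega) (by omega)
      have ih' : AfterB w (θ' 2) (θ' 1) := ih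
      rw [hθ2, ha] at ih'
      obtain ⟨hAll, hsB⟩ := ih'
      refine ⟨?_, hsB⟩
      intro s hs1 hs2
      rcases eq_or_lt_of_le hs1 with h' | h'
      · subst h'
        refine ⟨hl, ?_⟩
        intro he
        rw [← hVe] at hnV
        exact hnV (mem_eqSet_one.2 ⟨he ▸ (labelAt_letter_isSome hl).1, he.symm⟩)
      · exact hAll s h' hs2
    | endB =>
      show AfterB w (θ 2) (θ 1)
      obtain ⟨hi', ha, hb⟩ := hact
      have hθ2 : θ' 2 = θ 2 := hj 2 (by omega) (by omega)
      have ih' : SufB w (θ' 2 + 1) := ih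
      rw [hθ2] at ih'
      have hr := labelAt_rightMarker_iff.1 hl
      exact ⟨fun s hs1 hs2 => (by omega : False).elim, ih'⟩
    | moveB =>
      show SufB w (θ 2 + 1)
      obtain ⟨hi', ha, hb⟩ := hact
      replace ha : θ' 2 = θ 2 + 1 := ha
      have ih' : SufB w (θ' 2) := ih
      rw [ha] at ih'
      exact ih'
    | acceptA =>
      obtain ⟨hi', ha, hb⟩ := hact
      have hr := labelAt_rightMarker_iff.1 hl
      show SufA w (if θ 2 = 0 then 1 else θ 2)
      rw [if_neg hr.1]
      exact ⟨θ 2, le_rfl, fun s hs1 hs2 => absurd (lt_of_le_of_lt hs1 hs2) (lt_irrefl _),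
        fun s hs1 hs2 => (by omega : False).elim,
        fun s t hs1 hst ht => (by omega : False).elim⟩
    | acceptB =>
      show SufB w (θ 2)
      obtain ⟨hi', ha, hb⟩ := hact
      have hr := labelAt_rightMarker_iff.1 hl
      exact ⟨fun s hs1 hs2 => (by omega : False).elim,
        fun s t hs1 hst ht => (by omega : False).elim⟩

end sound
end LincProof
namespace LincProof
open WeakPA
section final
set_option linter.deprecated false
variable {D : Type}

lemma reconstruct {w : List (Bool × D)} (h : SufA w 1) : w ∈ Linc D := by
  obtain ⟨q, hq1, hA, hBlab, hBdis⟩ := h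
  have hdata : ∀ i : ℕ, dataAt w (i+1) = (w[i]?).map Prod.snd := by
    intro i; rw [dataAt_eq (by omega)]; norm_num
  have hqN : q ≤ w.length + 1 := by
    by_contra h'
    push_neg at h'
    have hlab := (hA (w.length+1) (by omega) (by omega)).1
    rw [labelAt_rightMarker_of_lt (by omega) (by omega)] at hlab
    cases hlab
  set k := q - 1 with hk
  have hkq : k + 1 = q := by omega
  have hbeta_ge : ∀ t, 1 ≤ t → labelAt w t = Tape.letter true → q ≤ t := by
    intro t h1t hlt
    by_contra h'
    push_neg at h'
    have h'' := (hA t h1t h').1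
    rw [h''] at hlt
    simp at hlt
  have hgu : ∀ l, l < k → ((w.take k).map Prod.snd)[l]? = dataAt w (l+1) := by
    intro l hl
    rw [List.getElem?_map, List.getElem?_take_of_lt hl, ← hdata l]
  have hgv : ∀ l, ((w.drop k).map Prod.snd)[l]? = dataAt w (k+l+1) := by
    intro l
    rw [List.getElem?_map, List.getElem?_drop, ← hdata (k+l)]
  refine ⟨(w.take k).map Prod.snd, (w.drop k).map Prod.snd, ?_, ?_, ?_, ?_⟩
  · -- decomposition of w
    conv_lhs => rw [← List.take_append_drop k w]
    congr 1
    · rw [List.map_map]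
      have hcg : ∀ x ∈ w.take k, ((fun a => ((false : Bool), a)) ∘ Prod.snd) x = id x := by
        rintro ⟨b, d⟩ hx
        obtain ⟨i, hi⟩ := List.mem_iff_getElem?.1 hx
        have hilt : i < (w.take k).length := by
          by_contra h'
          rw [List.getElem?_eq_none_iff.2 (by omega)] at hi; cases hi
        have hik : i < k := lt_of_lt_of_le hilt (by simp)
        have hwi : w[i]? = some (b, d) := by rw [← List.getElem?_take_of_lt hik]; exact hi
        have hlab := (hA (i+1) (by omega) (by omega)).1
        rw [labelAt_letter_iff] at hlab
        obtain ⟨-, x, hx'⟩ := hlab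
        rw [show i + 1 - 1 = i by omega, hwi] at hx'
        cases hx'
        rfl
      rw [List.map_congr_left hcg, List.map_id]
    · rw [List.map_map]
      have hcg : ∀ x ∈ w.drop k, ((fun a => ((true : Bool), a)) ∘ Prod.snd) x = id x := by
        rintro ⟨b, d⟩ hx
        obtain ⟨i, hi⟩ := List.mem_iff_getElem?.1 hx
        rw [List.getElem?_drop] at hi
        have hiN : k + i < w.length := by
          by_contra h'
          rw [List.getElem?_eq_none_iff.2 (by omega)] at hi; cases hi
        have hlab := hBlab (k+i+1) (by omega) (by omega)
        rw [labelAt_letter_iff] at hlab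
        obtain ⟨-, x, hx'⟩ := hlab
        rw [show k + i + 1 - 1 = k + i by omega, hi] at hx'
        cases hx'
        rfl
      rw [List.map_congr_left hcg, List.map_id]
  · -- u nodup
    rw [List.nodup_iff_getElem?_ne_getElem?]
    intro i j hij hj
    have hjk : j < k ∧ j < w.length := by
      simp only [List.length_map, List.length_take] at hj
      omega
    rw [hgu i (by omega), hgu j (by omega)]
    obtain ⟨-, t, ht1, ht2, ht3, ht4, ht5⟩ := hA (i+1) (by omega) (by omega)
    have htq : q ≤ t := hbeta_ge t (by omega) ht3
    intro he
    exact ht5 (j+1) (by omega) (by omega) he.symm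
  · -- v nodup
    rw [List.nodup_iff_getElem?_ne_getElem?]
    intro i j hij hj
    have hjN : k + j < w.length := by
      simp only [List.length_map, List.length_drop] at hj
      omega
    rw [hgv i, hgv j]
    exact hBdis (k+i+1) (k+j+1) (by omega) (by omega) (by omega)
  · -- containment
    intro a ha
    obtain ⟨i, hi⟩ := List.mem_iff_getElem?.1 ha
    have hilt : i < ((w.take k).map Prod.snd).length := by
      by_contra h'
      rw [List.getElem?_eq_none_iff.2 (by omega)] at hi; cases hi
    have hik : i < k ∧ i < w.length := by
      simp only [List.length_map, List.length_take] at hilt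
      omega
    have hda : dataAt w (i+1) = some a := by rw [← hgu i hik.1]; exact hi
    obtain ⟨-, t, ht1, ht2, ht3, ht4, ht5⟩ := hA (i+1) (by omega) (by omega)
    have htq : q ≤ t := hbeta_ge t (by omega) ht3
    refine List.mem_of_getElem? (i := t - 1 - k) ?_
    rw [hgv (t-1-k), show k + (t-1-k) + 1 = t by omega, ht4, hda]

lemma sound {w : List (Bool × D)} (hw : w ∈ A.Lang D) : w ∈ Linc D := by
  have hp := post_of_leads hw
  have h1 : SufA w (if (0:ℕ) = 0 then 1 else 0) := hp
  rw [if_pos rfl] at h1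
  exact reconstruct h1

end final
end LincProof

/-- `L_inc` is accepted by a weak 2-pebble automaton; moreover every
word in `L_inc` satisfies `m ≤ n` (the `α`-block is no longer than the `β`-block). -/
theorem Linc_accepted_by_weak2PA_and_length_le (D : Type) :
    (∃ A : WeakPA Bool 2, A.Lang D = Linc D) ∧
    (∀ u v : List D, u.Nodup → v.Nodup → (∀ a ∈ u, a ∈ v) → u.length ≤ v.length) := by
  constructor
  · refine ⟨LincProof.A, ?_⟩
    ext w
    exact ⟨LincProof.sound, LincProof.complete⟩
  · intro u v hu hv huv
    exact (hu.subperm fun a ha => huv a ha).length_le
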